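/- arXiv:1301.2643 — 6 statements merged into one kernel-verified Lean document; each statement's English description precedes it below -/
import Mathlib

section
/- For 1 < ν < 2 and m ≥ 3, the coefficient g_m^ν = (m+1)^{3-ν} - 4m^{3-ν} + 6(m-1)^{3-ν} - 4(m-2)^{3-ν} + (m-3)^{3-ν} is positive. -/
open Set Filter Real

noncomputable def g (ν : ℝ) : ℕ → ℝ
  | 0 => 1
  | 1 => -4 + (2:ℝ) ^ (3 - ν)
  | 2 => 6 - (2:ℝ) ^ (5 - ν) + (3:ℝ) ^ (3 - ν)
  | m => ((m:ℝ) + 1) ^ (3 - ν) - 4 * (m:ℝ) ^ (3 - ν) + 6 * ((m:ℝ) - 1) ^ (3 - ν)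
        - 4 * ((m:ℝ) - 2) ^ (3 - ν) + ((m:ℝ) - 3) ^ (3 - ν)

lemma rpow_strictConvexOn_neg {p : ℝ} (hp : p < 0) :
    StrictConvexOn ℝ (Ioi 0) (fun x : ℝ => x ^ p) := by
  apply strictConvexOn_of_deriv2_pos (convex_Ioi 0)
  · intro x hx
    exact (Real.continuousAt_rpow_const x p (Or.inl (ne_of_gt hx))).continuousWithinAt
  · intro x hx
    rw [interior_Ioi] at hx
    have hx0 : x ≠ 0 := ne_of_gt hx
    have h1 : deriv (fun y : ℝ => y ^ p) =ᶠ[nhds x] fun y => p * y ^ (p - 1) := by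
      filter_upwards [eventually_ne_nhds hx0] with y hy
      exact Real.deriv_rpow_const y p
    have h2 : deriv^[2] (fun y : ℝ => y ^ p) x
        = deriv (fun y : ℝ => p * y ^ (p - 1)) x := by
      show deriv (deriv (fun y : ℝ => y ^ p)) x = _
      exact h1.deriv_eq
    rw [h2, deriv_const_mul _ (Real.differentiableAt_rpow_const_of_ne _ hx0),
      Real.deriv_rpow_const x (p - 1)]
    have hpp : 0 < p * (p - 1) := by nlinarith
    nlinarith [mul_pos hpp (Real.rpow_pos_of_pos hx (p - 1 - 1))]

lemma second_diff_pos {p : ℝ} (hp : p < 0) {x : ℝ} (hx : 1 < x) :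
    0 < (x + 1) ^ p - 2 * x ^ p + (x - 1) ^ p := by
  have h := (rpow_strictConvexOn_neg hp).2 (show x - 1 ∈ Ioi (0:ℝ) by simp; linarith)
    (show x + 1 ∈ Ioi (0:ℝ) by simp; linarith) (by intro h; linarith)
    (by norm_num : (0:ℝ) < 1/2) (by norm_num : (0:ℝ) < 1/2) (by norm_num)
  simp only [smul_eq_mul] at h
  have e : (1/2:ℝ) * (x - 1) + (1/2:ℝ) * (x + 1) = x := by ring
  rw [e] at h
  linarith

lemma hdaAdd (c q : ℝ) {x : ℝ} (hx : x + c ≠ 0) :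
    HasDerivAt (fun y : ℝ => (y + c) ^ q) (q * (x + c) ^ (q - 1)) x := by
  simpa using ((hasDerivAt_id x).add_const c).rpow_const (Or.inl hx)

lemma hdaSub (c q : ℝ) {x : ℝ} (hx : x - c ≠ 0) :
    HasDerivAt (fun y : ℝ => (y - c) ^ q) (q * (x - c) ^ (q - 1)) x := by
  simpa using ((hasDerivAt_id x).sub_const c).rpow_const (Or.inl hx)

lemma D_convex {a : ℝ} (h1 : 1 < a) (h2 : a < 2) :
    StrictConvexOn ℝ (Ici 1) (fun x : ℝ => (x + 1) ^ a - 2 * x ^ a + (x - 1) ^ a) := by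
  have ha0 : 0 < a := by linarith
  have hcont : Continuous (fun x : ℝ => x ^ a) := by
    apply continuous_iff_continuousAt.2
    intro x
    exact Real.continuousAt_rpow_const x a (Or.inr ha0.le)
  apply strictConvexOn_of_deriv2_pos (convex_Ici 1)
  · exact (((hcont.comp (continuous_id.add continuous_const)).sub
      (continuous_const.mul hcont)).add
      (hcont.comp (continuous_id.sub continuous_const))).continuousOn
  · intro x hx
    rw [interior_Ici] at hx
    have hx1 : (1:ℝ) < x := hx
    have hD : ∀ y ∈ Ioi (1:ℝ), HasDerivAt (fun z : ℝ => (z + 1) ^ a - 2 * z ^ a + (z - 1) ^ a)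
        (a * (y + 1) ^ (a - 1) - 2 * (a * y ^ (a - 1)) + a * (y - 1) ^ (a - 1)) y := by
      intro y hy
      have hy1 : (1:ℝ) < y := hy
      exact ((hdaAdd 1 a (by linarith)).sub
        ((Real.hasDerivAt_rpow_const (Or.inl (by linarith : y ≠ 0))).const_mul 2)).add
        (hdaSub 1 a (by intro h; nlinarith [sub_eq_zero.mp h]))
    have heq : deriv (fun z : ℝ => (z + 1) ^ a - 2 * z ^ a + (z - 1) ^ a) =ᶠ[nhds x]
        fun y => a * (y + 1) ^ (a - 1) - 2 * (a * y ^ (a - 1)) + a * (y - 1) ^ (a - 1) := by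
      filter_upwards [isOpen_Ioi.mem_nhds hx] with y hy
      exact (hD y hy).deriv
    have h2 : deriv^[2] (fun z : ℝ => (z + 1) ^ a - 2 * z ^ a + (z - 1) ^ a) x
        = deriv (fun y : ℝ => a * (y + 1) ^ (a - 1) - 2 * (a * y ^ (a - 1)) + a * (y - 1) ^ (a - 1)) x := by
      show deriv (deriv _) x = _
      exact heq.deriv_eq
    rw [h2]
    have hD2 : HasDerivAt (fun y : ℝ => a * (y + 1) ^ (a - 1) - 2 * (a * y ^ (a - 1)) + a * (y - 1) ^ (a - 1))
        (a * ((a - 1) * (x + 1) ^ (a - 1 - 1)) - 2 * (a * ((a - 1) * x ^ (a - 1 - 1)))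
          + a * ((a - 1) * (x - 1) ^ (a - 1 - 1))) x := by
      exact (((hdaAdd 1 (a-1) (by linarith)).const_mul a).sub
        (((Real.hasDerivAt_rpow_const (Or.inl (by linarith : x ≠ 0))).const_mul a).const_mul 2)).add
        ((hdaSub 1 (a-1) (by intro h; nlinarith [sub_eq_zero.mp h])).const_mul a)
    rw [hD2.deriv]
    have hpos := second_diff_pos (show a - 1 - 1 < 0 by linarith) hx1
    have haa : 0 < a * (a - 1) := by nlinarith
    nlinarith [mul_pos haa hpos]

theorem stmt1 (ν : ℝ) (hν1 : 1 < ν) (hν2 : ν < 2) (m : ℕ) (hm : 3 ≤ m) :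
    0 < g ν m := by
  obtain ⟨n, rfl⟩ : ∃ n, m = n + 3 := ⟨m - 3, by omega⟩
  set a : ℝ := 3 - ν with ha
  have ha1 : 1 < a := by rw [ha]; linarith
  have ha2 : a < 2 := by rw [ha]; linarith
  set x : ℝ := (n : ℝ) + 3 with hxdef
  have hx3 : (3:ℝ) ≤ x := by rw [hxdef]; have := Nat.cast_nonneg (α := ℝ) n; linarith
  have hg : g ν (n + 3) = (x + 1) ^ a - 4 * x ^ a + 6 * (x - 1) ^ a
      - 4 * (x - 2) ^ a + (x - 3) ^ a := by
    have h0 : g ν (n + 3) = ((((n+3:ℕ)):ℝ) + 1) ^ (3 - ν) - 4 * (((n+3:ℕ)):ℝ) ^ (3 - ν)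
        + 6 * ((((n+3:ℕ)):ℝ) - 1) ^ (3 - ν) - 4 * ((((n+3:ℕ)):ℝ) - 2) ^ (3 - ν)
        + ((((n+3:ℕ)):ℝ) - 3) ^ (3 - ν) := rfl
    rw [h0, ← ha, hxdef]
    push_cast
    ring_nf
  rw [hg]
  have hconv := (D_convex ha1 ha2).2 (show x - 2 ∈ Ici (1:ℝ) by simp; linarith)
    (show x ∈ Ici (1:ℝ) by simp; linarith) (by intro h; linarith)
    (by norm_num : (0:ℝ) < 1/2) (by norm_num : (0:ℝ) < 1/2) (by norm_num)
  simp only [smul_eq_mul] at hconv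
  have e : (1/2:ℝ) * (x - 2) + (1/2:ℝ) * x = x - 1 := by ring
  rw [e] at hconv
  have e1 : x - 1 + 1 = x := by ring
  have e2 : x - 1 - 1 = x - 2 := by ring
  have e3 : x - 2 + 1 = x - 1 := by ring
  have e4 : x - 2 - 1 = x - 3 := by ring
  rw [e1, e2, e3, e4] at hconv
  linarith
end

section
/- For 1 < ν < 2, the inequality g_0^ν + g_2^ν < -g_1^ν < (5/2)(g_0^ν + g_2^ν) holds, where g_0^ν = 1, g_1^ν = -4 + 2^{3-ν}, and g_2^ν = 6 - 2^{5-ν} + 3^{3-ν}. -/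
theorem stmt2 (ν : ℝ) (hν1 : 1 < ν) (hν2 : ν < 2) :
    g ν 0 + g ν 2 < -(g ν 1) ∧ -(g ν 1) < (5/2) * (g ν 0 + g ν 2) := by
  set s : ℝ := 2 - ν with hs
  have hs0 : 0 < s := by simp only [hs]; linarith
  have hs1 : s < 1 := by simp only [hs]; linarith
  set A : ℝ := (2:ℝ) ^ s with hA
  set B : ℝ := (3:ℝ) ^ s with hB
  have hA1 : 1 < A := Real.one_lt_rpow_iff_of_pos (by norm_num) |>.2 (Or.inl ⟨by norm_num, hs0⟩)
  have hB1 : 1 < B := Real.one_lt_rpow_iff_of_pos (by norm_num) |>.2 (Or.inl ⟨by norm_num, hs0⟩)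
  have hA2 : A < 2 := by
    have : (2:ℝ) ^ s < 2 ^ (1:ℝ) :=
      (Real.rpow_lt_rpow_left_iff (by norm_num)).2 hs1
    simpa [Real.rpow_one] using this
  -- key1 : 1 + B < 2 * A  (strict concavity, midpoint of 1 and 3)
  have key1 : (1:ℝ) + B < 2 * A := by
    have h := (Real.strictConcaveOn_rpow hs0 hs1).2
      (show (1:ℝ) ∈ Set.Ici (0:ℝ) by norm_num)
      (show (3:ℝ) ∈ Set.Ici (0:ℝ) by norm_num)
      (by norm_num) (by norm_num : (0:ℝ) < 1/2) (by norm_num : (0:ℝ) < 1/2)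
      (by norm_num)
    rw [show ((1/2:ℝ) • (1:ℝ) + (1/2:ℝ) • (3:ℝ)) = (2:ℝ) by norm_num] at h
    simp only [smul_eq_mul] at h
    rw [Real.one_rpow] at h
    linarith
  -- key2 : 3*A^3 + A^2*B ≤ 4*B^2  (concavity: 9 = (3/4)*8 + (1/4)*12)
  have h8 : (8:ℝ)^s = A*A*A := by
    rw [show (8:ℝ) = 2*2*2 by norm_num, Real.mul_rpow (by positivity) (by norm_num),
      Real.mul_rpow (by norm_num) (by norm_num)]
  have h12 : (12:ℝ)^s = A*A*B := by
    rw [show (12:ℝ) = 2*2*3 by norm_num, Real.mul_rpow (by positivity) (by norm_num),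
      Real.mul_rpow (by norm_num) (by norm_num)]
  have h9 : (9:ℝ)^s = B*B := by
    rw [show (9:ℝ) = 3*3 by norm_num, Real.mul_rpow (by norm_num) (by norm_num)]
  have key2 : 3*(A*A*A) + A*A*B ≤ 4*(B*B) := by
    have h := (Real.concaveOn_rpow hs0.le hs1.le).2
      (show (8:ℝ) ∈ Set.Ici (0:ℝ) by norm_num)
      (show (12:ℝ) ∈ Set.Ici (0:ℝ) by norm_num)
      (by norm_num : (0:ℝ) ≤ 3/4) (by norm_num : (0:ℝ) ≤ 1/4) (by norm_num)
    have e : ((3/4:ℝ) • (8:ℝ) + (1/4:ℝ) • (12:ℝ)) = (9:ℝ) := by norm_num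
    rw [e] at h
    simp only [smul_eq_mul] at h
    rw [h8, h12, h9] at h
    linarith
  -- 12 A < 9 + 5 B
  have key3 : 12 * A < 9 + 5 * B := by
    nlinarith [sq_nonneg (A - 2), sq_nonneg (B - 3), mul_pos (sub_pos.2 hA2) (sub_pos.2 hA1),
      mul_pos (sub_pos.2 hA1) (sub_pos.2 hB1), sq_nonneg (5*B - 12*A + 9)]
  -- express g values
  have e1 : (2:ℝ) ^ (3 - ν) = 2 * A := by
    rw [show (3:ℝ) - ν = 1 + s by rw [hs]; ring, Real.rpow_add (by norm_num), Real.rpow_one]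
  have e2 : (2:ℝ) ^ (5 - ν) = 8 * A := by
    rw [show (5:ℝ) - ν = 1 + 1 + 1 + s by rw [hs]; ring,
      Real.rpow_add (by norm_num), Real.rpow_add (by norm_num), Real.rpow_add (by norm_num),
      Real.rpow_one]
    ring
  have e3 : (3:ℝ) ^ (3 - ν) = 3 * B := by
    rw [show (3:ℝ) - ν = 1 + s by rw [hs]; ring, Real.rpow_add (by norm_num), Real.rpow_one]
  have g0 : g ν 0 = 1 := rfl
  have g1 : g ν 1 = -4 + 2 * A := by rw [show g ν 1 = -4 + (2:ℝ) ^ (3 - ν) from rfl, e1]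
  have g2 : g ν 2 = 6 - 8 * A + 3 * B := by
    rw [show g ν 2 = 6 - (2:ℝ) ^ (5 - ν) + (3:ℝ) ^ (3 - ν) from rfl, e2, e3]
  rw [g0, g1, g2]
  constructor <;> nlinarith [key1, key3]
end

section
/- For 1 < ν < 2, the sum g_0^ν + g_2^ν = 7 - 2^{5-ν} + 3^{3-ν} is positive. -/
lemma aux_exp_neg_ub {v : ℝ} (hv : 0 ≤ v) : Real.exp (-v) ≤ 1 - v + v^2/2 := by
  have hq : 1 + v + v^2/2 ≤ Real.exp v := Real.quadratic_le_exp_of_nonneg hv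
  have hprod : Real.exp (-v) * Real.exp v = 1 := by rw [← Real.exp_add]; simp
  have hc : 0 < 1 - v + v^2/2 := by nlinarith [sq_nonneg (v - 1)]
  have h2 : (1 - v + v^2/2) * (1 + v + v^2/2) ≤ (1 - v + v^2/2) * Real.exp v :=
    mul_le_mul_of_nonneg_left hq hc.le
  nlinarith [Real.exp_pos v, sq_nonneg (v^2)]

lemma aux_exp_neg_lb {v : ℝ} (hv0 : 0 ≤ v) (hv2 : v ≤ 2) :
    (1 - v/2)^2 ≤ Real.exp (-v) := by
  have he : 1 - v/2 ≤ Real.exp (-(v/2)) := by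
    have := Real.add_one_le_exp (-(v/2)); linarith
  have hsq : Real.exp (-(v/2))^2 = Real.exp (-v) := by
    rw [sq, ← Real.exp_add]; ring_nf
  calc (1 - v/2)^2 ≤ Real.exp (-(v/2))^2 := by
        apply pow_le_pow_left₀ (by linarith) he 2
    _ = Real.exp (-v) := hsq

lemma aux_log3_lo : 1.0985 < Real.log 3 := by
  have h : (2:ℝ)^(84:ℕ) < 3^(53:ℕ) := by norm_num
  have h2 := Real.log_lt_log (by positivity) h
  rw [Real.log_pow, Real.log_pow] at h2
  push_cast at h2
  have hL2a : 0.6931471803 < Real.log 2 := Real.log_two_gt_d9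
  linarith

lemma aux_log3_hi : Real.log 3 < 1.099 := by
  have h : (3:ℝ)^(41:ℕ) < 2^(65:ℕ) := by norm_num
  have h2 := Real.log_lt_log (by positivity) h
  rw [Real.log_pow, Real.log_pow] at h2
  push_cast at h2
  have hL2b : Real.log 2 < 0.6931471808 := Real.log_two_lt_d9
  linarith

lemma aux_key {u : ℝ} (hu0 : 0 < u) (hu1 : u < 1) :
    0 < 16*(u*Real.log 2) - 8*(u*Real.log 2)^2 - 9*(u*Real.log 3)
      + (9/4)*(u*Real.log 3)^2 := by
  have hL2a : 0.6931471803 < Real.log 2 := Real.log_two_gt_d9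
  have hL2b : Real.log 2 < 0.6931471808 := Real.log_two_lt_d9
  have hL3a : 1.0985 < Real.log 3 := aux_log3_lo
  have hL3b : Real.log 3 < 1.099 := aux_log3_hi
  set L2 := Real.log 2
  set L3 := Real.log 3
  have hc1 : 1.199 < 16*L2 - 9*L3 := by nlinarith
  have hs2 : L2^2 < 0.4805 := by nlinarith [mul_lt_mul'' hL2b hL2b (by linarith) (by linarith)]
  have hs3 : 1.2067 < L3^2 := by
    nlinarith [mul_lt_mul'' hL3a hL3a (by norm_num) (by norm_num)]
  have hc2 : 8*L2^2 - (9/4)*L3^2 < 1.129 := by linarith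
  have heq : 16*(u*L2) - 8*(u*L2)^2 - 9*(u*L3) + (9/4)*(u*L3)^2
      = u*((16*L2 - 9*L3) - u*(8*L2^2 - (9/4)*L3^2)) := by ring
  rw [heq]
  apply mul_pos hu0
  nlinarith [hc1, hc2, hu0, hu1]

set_option maxHeartbeats 1000000 in
theorem stmt3 (ν : ℝ) (hν1 : 1 < ν) (hν2 : ν < 2) :
    0 < g ν 0 + g ν 2 ∧ g ν 0 + g ν 2 = 7 - (2:ℝ) ^ (5 - ν) + (3:ℝ) ^ (3 - ν) := by
  have hval : g ν 0 + g ν 2 = 7 - (2:ℝ) ^ (5 - ν) + (3:ℝ) ^ (3 - ν) := by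
    simp only [g]; ring
  refine ⟨?_, hval⟩
  rw [hval]
  set L2 := Real.log 2 with hL2def
  set L3 := Real.log 3 with hL3def
  set u := ν - 1 with hudef
  have hu0 : 0 < u := by simp only [hudef]; linarith
  have hu1 : u < 1 := by simp only [hudef]; linarith
  have hL2pos : 0 < L2 := Real.log_pos (by norm_num)
  have hL3pos : 0 < L3 := Real.log_pos (by norm_num)
  have hL3hi : L3 < 1.099 := aux_log3_hi
  have hA : (2:ℝ) ^ (5 - ν) = 16 * Real.exp (-(u*L2)) := by
    rw [Real.rpow_def_of_pos (by norm_num : (0:ℝ) < 2),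
      show (16:ℝ) = Real.exp (Real.log 16) from (Real.exp_log (by norm_num)).symm,
      ← Real.exp_add]
    congr 1
    have h16 : Real.log 16 = 4 * L2 := by
      rw [show (16:ℝ) = 2^(4:ℕ) by norm_num, Real.log_pow, ← hL2def]; push_cast; ring
    rw [h16, hudef]; ring
  have hB : (3:ℝ) ^ (3 - ν) = 9 * Real.exp (-(u*L3)) := by
    rw [Real.rpow_def_of_pos (by norm_num : (0:ℝ) < 3),
      show (9:ℝ) = Real.exp (Real.log 9) from (Real.exp_log (by norm_num)).symm,
      ← Real.exp_add]
    congr 1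
    have h9 : Real.log 9 = 2 * L3 := by
      rw [show (9:ℝ) = 3^(2:ℕ) by norm_num, Real.log_pow, ← hL3def]; push_cast; ring
    rw [h9, hudef]; ring
  rw [hA, hB]
  have hv2 : 0 ≤ u * L2 := by positivity
  have hv3 : 0 ≤ u * L3 := by positivity
  have hv3' : u * L3 ≤ 2 := by nlinarith
  have hub : Real.exp (-(u*L2)) ≤ 1 - u*L2 + (u*L2)^2/2 := aux_exp_neg_ub hv2
  have hlb : (1 - (u*L3)/2)^2 ≤ Real.exp (-(u*L3)) := aux_exp_neg_lb hv3 hv3'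
  have key := aux_key hu0 hu1
  rw [← hL2def, ← hL3def] at key
  have hexp : 9*(1 - (u*L3)/2)^2 = 9 - 9*(u*L3) + (9/4)*(u*L3)^2 := by ring
  linarith [hub, hlb, key, hexp]
end

section
/- Let A, B be commuting complex n×n matrices such that every eigenvalue of A and every eigenvalue of B has negative real part. Then the error iteration matrices M_A = (I-A)⁻¹(I+A) and M_B = (I-B)⁻¹(I+B) satisfy (M_A M_B)^k → 0 as k → ∞. -/
open scoped Matrix

attribute [local instance] Matrix.linftyOpNormedRing Matrix.linftyOpNormedAlgebra

set_option synthInstance.maxHeartbeats 1000000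
set_option maxHeartbeats 1000000

namespace Stmt9Aux

variable {n : ℕ}

local notation "𝕄" => Matrix (Fin n) (Fin n) ℂ

lemma commute_inv {X Y : 𝕄} (h : Commute X Y) (hY : IsUnit Y) : Commute X Y⁻¹ := by
  have hd : IsUnit Y.det := (Matrix.isUnit_iff_isUnit_det Y).mp hY
  have h1 : Y⁻¹ * Y = 1 := Matrix.nonsing_inv_mul Y hd
  have h2 : Y * Y⁻¹ = 1 := Matrix.mul_nonsing_inv Y hd
  show X * Y⁻¹ = Y⁻¹ * X
  have e1 : X * Y⁻¹ = Y⁻¹ * (Y * (X * Y⁻¹)) := by rw [← mul_assoc, h1, one_mul]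
  rw [e1, ← mul_assoc Y X Y⁻¹, ← h.eq, mul_assoc X Y Y⁻¹, h2, mul_one]

lemma isUnit_in_subalgebra (S : Subalgebra ℂ 𝕄) (x : S)
    (h : IsUnit (x : 𝕄)) : IsUnit x := by
  set f : S →ₗ[ℂ] S := LinearMap.mulLeft ℂ x with hf
  have hinj : Function.Injective f := by
    intro u v huv
    have h2 : (x : 𝕄) * u = (x : 𝕄) * v := congrArg Subtype.val huv
    exact Subtype.ext (h.mul_left_cancel h2)
  have hsurj : Function.Surjective f :=
    (LinearMap.injective_iff_surjective).mp hinj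
  obtain ⟨y, hy⟩ := hsurj 1
  have hy' : x * y = 1 := hy
  have hyx : y * x = 1 := by
    apply hinj
    show x * (y * x) = x * 1
    rw [← mul_assoc, hy', one_mul, mul_one]
  exact ⟨⟨x, y, hy', hyx⟩, rfl⟩

lemma spectrum_subset (S : Subalgebra ℂ 𝕄) (x : S) :
    spectrum ℂ x ⊆ spectrum ℂ (x : 𝕄) := by
  intro z hz
  rw [spectrum.mem_iff] at hz ⊢
  contrapose! hz
  have hcoe : ((algebraMap ℂ S z - x : S) : 𝕄) = algebraMap ℂ 𝕄 z - (x : 𝕄) := by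
    push_cast
    rfl
  exact isUnit_in_subalgebra S _ (by rw [hcoe]; exact hz)

end Stmt9Aux

open Stmt9Aux Filter
open scoped ENNReal NNReal Topology

set_option maxHeartbeats 2000000 in
theorem stmt9 (n : ℕ) (A B : Matrix (Fin n) (Fin n) ℂ)
    (hcomm : A * B = B * A)
    (hA : ∀ μ ∈ spectrum ℂ A, μ.re < 0)
    (hB : ∀ μ ∈ spectrum ℂ B, μ.re < 0) :
    Filter.Tendsto
      (fun k : ℕ => (((1 - A)⁻¹ * (1 + A)) * ((1 - B)⁻¹ * (1 + B))) ^ k)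
      Filter.atTop (nhds 0) := by
  rcases Nat.eq_zero_or_pos n with hn | hn
  · subst hn
    have h0 : ∀ k : ℕ, (((1 - A)⁻¹ * (1 + A)) * ((1 - B)⁻¹ * (1 + B))) ^ k = 0 :=
      fun k => Subsingleton.elim _ _
    rw [show (fun k : ℕ => (((1 - A)⁻¹ * (1 + A)) * ((1 - B)⁻¹ * (1 + B))) ^ k)
      = fun _ : ℕ => (0 : Matrix (Fin 0) (Fin 0) ℂ) from funext h0]
    exact tendsto_const_nhds
  haveI : Nonempty (Fin n) := ⟨⟨0, hn⟩⟩
  -- invertibility of 1 - A and 1 - B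
  have hA1 : IsUnit (1 - A) := by
    by_contra hu
    have h1 : (1 : ℂ) ∈ spectrum ℂ A := by
      rw [spectrum.mem_iff]
      simpa using hu
    have h2 := hA 1 h1
    rw [Complex.one_re] at h2
    linarith
  have hB1 : IsUnit (1 - B) := by
    by_contra hu
    have h1 : (1 : ℂ) ∈ spectrum ℂ B := by
      rw [spectrum.mem_iff]
      simpa using hu
    have h2 := hB 1 h1
    rw [Complex.one_re] at h2
    linarith
  -- commutation facts
  have cAB : Commute A B := hcomm
  have cA1B : Commute A (1 - B) := (Commute.one_right A).sub_right cAB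
  have cB1A : Commute B (1 - A) := (Commute.one_right B).sub_right cAB.symm
  have cA1A : Commute A (1 - A) := (Commute.one_right A).sub_right (Commute.refl A)
  have cB1B : Commute B (1 - B) := (Commute.one_right B).sub_right (Commute.refl B)
  have cAiA : Commute A (1 - A)⁻¹ := commute_inv cA1A hA1
  have cAiB : Commute A (1 - B)⁻¹ := commute_inv cA1B hB1
  have cBiA : Commute B (1 - A)⁻¹ := commute_inv cB1A hA1
  have cBiB : Commute B (1 - B)⁻¹ := commute_inv cB1B hB1
  have c1A1B : Commute (1 - A) (1 - B) := (Commute.one_left (1 - B)).sub_left cA1B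
  have ciA1B : Commute (1 - A)⁻¹ (1 - B) := (commute_inv c1A1B.symm hA1).symm
  have ciAiB : Commute (1 - A)⁻¹ (1 - B)⁻¹ := commute_inv ciA1B hB1
  -- the commutative subalgebra
  set s : Set (Matrix (Fin n) (Fin n) ℂ) := {A, B, (1 - A)⁻¹, (1 - B)⁻¹} with hs_def
  have hs : ∀ x ∈ s, ∀ y ∈ s, x * y = y * x := by
    intro x hx y hy
    simp only [hs_def, Set.mem_insert_iff, Set.mem_singleton_iff] at hx hy
    rcases hx with rfl | rfl | rfl | rfl <;> rcases hy with rfl | rfl | rfl | rfl <;>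
      first
        | rfl
        | exact cAB.eq
        | exact cAB.symm.eq
        | exact cAiA.eq
        | exact cAiA.symm.eq
        | exact cAiB.eq
        | exact cAiB.symm.eq
        | exact cBiA.eq
        | exact cBiA.symm.eq
        | exact cBiB.eq
        | exact cBiB.symm.eq
        | exact ciAiB.eq
        | exact ciAiB.symm.eq
  set S : Subalgebra ℂ (Matrix (Fin n) (Fin n) ℂ) := Algebra.adjoin ℂ s with hS_def
  letI : CommRing S := Algebra.adjoinCommRingOfComm ℂ hs
  letI : NormedCommRing S := { (inferInstance : NormedRing S) with mul_comm := mul_comm }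
  haveI : FiniteDimensional ℂ S := FiniteDimensional.finiteDimensional_submodule
    (Subalgebra.toSubmodule S)
  haveI : CompleteSpace S := by
    haveI : IsUniformAddGroup S := SeminormedAddCommGroup.to_isUniformAddGroup
    exact FiniteDimensional.complete ℂ S
  -- the elements inside S
  have hAS : A ∈ S := Algebra.subset_adjoin (by simp [hs_def])
  have hBS : B ∈ S := Algebra.subset_adjoin (by simp [hs_def])
  have hiAS : (1 - A)⁻¹ ∈ S := Algebra.subset_adjoin (by simp [hs_def])
  have hiBS : (1 - B)⁻¹ ∈ S := Algebra.subset_adjoin (by simp [hs_def])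
  set a : S := ⟨A, hAS⟩ with ha_def
  set b : S := ⟨B, hBS⟩ with hb_def
  set ia : S := ⟨(1 - A)⁻¹, hiAS⟩ with hia_def
  set ib : S := ⟨(1 - B)⁻¹, hiBS⟩ with hib_def
  set m : S := (ia * (1 + a)) * (ib * (1 + b)) with hm_def
  have hmcoe : (m : Matrix (Fin n) (Fin n) ℂ)
      = ((1 - A)⁻¹ * (1 + A)) * ((1 - B)⁻¹ * (1 + B)) := rfl
  -- spectrum bound
  have key : ∀ γ : ℂ, γ.re < 0 → ‖(1 - γ)⁻¹ * (1 + γ)‖ < 1 := by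
    intro γ hγ
    have h1 : Complex.normSq (1 + γ) < Complex.normSq (1 - γ) := by
      simp only [Complex.normSq_apply, Complex.add_re, Complex.add_im, Complex.sub_re,
        Complex.sub_im, Complex.one_re, Complex.one_im]
      nlinarith
    have h2 : ‖1 + γ‖ < ‖1 - γ‖ := by
      rw [Complex.norm_def, Complex.norm_def]
      exact Real.sqrt_lt_sqrt (Complex.normSq_nonneg _) h1
    have h3 : (0 : ℝ) < ‖1 - γ‖ := lt_of_le_of_lt (norm_nonneg _) h2
    rw [norm_mul, norm_inv]
    rw [inv_mul_eq_div, div_lt_one h3]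
    exact h2
  have hspec : ∀ z ∈ spectrum ℂ (((1 - A)⁻¹ * (1 + A)) * ((1 - B)⁻¹ * (1 + B))),
      ‖z‖₊ < 1 := by
    intro z hz
    rw [← hmcoe] at hz
    have hz' : z ∈ spectrum ℂ m := spectrum.subset_subalgebra m hz
    obtain ⟨φ, hφ⟩ := (WeakDual.CharacterSpace.mem_spectrum_iff_exists).mp hz'
    set α := φ a with hα_def
    set β := φ b with hβ_def
    have hα : α ∈ spectrum ℂ A := spectrum_subset S a (AlgHom.apply_mem_spectrum φ a)
    have hβ : β ∈ spectrum ℂ B := spectrum_subset S b (AlgHom.apply_mem_spectrum φ b)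
    have hαre : α.re < 0 := hA α hα
    have hβre : β.re < 0 := hB β hβ
    have hia2 : (1 - α) * φ ia = 1 := by
      have h1 : (1 - a) * ia = 1 := Subtype.ext
        (Matrix.mul_nonsing_inv _ ((Matrix.isUnit_iff_isUnit_det _).mp hA1))
      have := congrArg φ h1
      simpa [map_mul, map_sub, map_one] using this
    have hib2 : (1 - β) * φ ib = 1 := by
      have h1 : (1 - b) * ib = 1 := Subtype.ext
        (Matrix.mul_nonsing_inv _ ((Matrix.isUnit_iff_isUnit_det _).mp hB1))
      have := congrArg φ h1
      simpa [map_mul, map_sub, map_one] using this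
    have hαne : (1 - α) ≠ 0 := by
      intro h0
      rw [h0, zero_mul] at hia2
      exact one_ne_zero hia2.symm
    have hβne : (1 - β) ≠ 0 := by
      intro h0
      rw [h0, zero_mul] at hib2
      exact one_ne_zero hib2.symm
    have hia3 : φ ia = (1 - α)⁻¹ :=
      mul_left_cancel₀ hαne (by rw [hia2, mul_inv_cancel₀ hαne])
    have hib3 : φ ib = (1 - β)⁻¹ :=
      mul_left_cancel₀ hβne (by rw [hib2, mul_inv_cancel₀ hβne])
    have hzeq : z = ((1 - α)⁻¹ * (1 + α)) * ((1 - β)⁻¹ * (1 + β)) := by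
      rw [← hφ, hm_def]
      simp [map_mul, map_add, map_one, hia3, hib3, hα_def, hβ_def]
    have k1 : ‖(1 - α)⁻¹ * (1 + α)‖ < 1 := key α hαre
    have k2 : ‖(1 - β)⁻¹ * (1 + β)‖ < 1 := key β hβre
    have hn1 : ‖z‖ < 1 := by
      rw [hzeq, norm_mul]
      nlinarith [norm_nonneg ((1 - α)⁻¹ * (1 + α)), norm_nonneg ((1 - β)⁻¹ * (1 + β))]
    rw [← NNReal.coe_lt_coe, coe_nnnorm, NNReal.coe_one]
    exact hn1
  -- spectral radius < 1
  set Mt := ((1 - A)⁻¹ * (1 + A)) * ((1 - B)⁻¹ * (1 + B)) with hMt_def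
  haveI : Nontrivial (Matrix (Fin n) (Fin n) ℂ) := Matrix.nonempty
  have hρ : spectralRadius ℂ Mt < 1 := by
    have := spectrum.spectralRadius_lt_of_forall_lt Mt (r := 1) hspec
    simpa using this
  obtain ⟨r, hr1, hr2⟩ := ENNReal.lt_iff_exists_nnreal_btwn.mp hρ
  have hg := spectrum.pow_nnnorm_pow_one_div_tendsto_nhds_spectralRadius Mt
  have hev : ∀ᶠ k : ℕ in atTop, ((‖Mt ^ k‖₊ : ℝ≥0∞)) ^ (1 / (k : ℝ)) < (r : ℝ≥0∞) :=
    hg.eventually_lt_const hr1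
  have hev2 : ∀ᶠ k : ℕ in atTop, ‖Mt ^ k‖ ≤ (r : ℝ) ^ k := by
    filter_upwards [hev, eventually_ge_atTop 1] with k hk hk1
    have hkpos : (0 : ℝ) < (k : ℝ) := by exact_mod_cast hk1
    have h3 := ENNReal.rpow_lt_rpow hk hkpos
    rw [← ENNReal.rpow_mul, one_div, inv_mul_cancel₀ (ne_of_gt hkpos),
      ENNReal.rpow_one, ENNReal.rpow_natCast, ← ENNReal.coe_pow, ENNReal.coe_lt_coe] at h3
    calc ‖Mt ^ k‖ = ((‖Mt ^ k‖₊ : ℝ≥0) : ℝ) := (coe_nnnorm _).symm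
      _ ≤ ((r ^ k : ℝ≥0) : ℝ) := by exact_mod_cast h3.le
      _ = (r : ℝ) ^ k := by push_cast; ring
  have hrlt : (r : ℝ) < 1 := by
    have : r < 1 := by exact_mod_cast hr2
    exact_mod_cast this
  exact squeeze_zero_norm' hev2 (tendsto_pow_atTop_nhds_zero_of_lt_one r.coe_nonneg hrlt)
end

section
/- Let A be a real n×n symmetric positive definite matrix with diagonal part D, and let 0 < ω < 2/η₀ where η₀ ≥ ρ(D⁻¹A). Set S = I - ωD⁻¹A and σ = ω(2 - ωη₀). Then for every vector e, (A S e, S e) ≤ (A e, e) - σ (D⁻¹ A e, A e). -/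
open Matrix Pointwise

-- transfer: real spectrum elements of M are ≤ η₀ given det-equality with D⁻¹A whose ℂ-spectrum is bounded
lemma quad_bound {n : ℕ} (M : Matrix (Fin n) (Fin n) ℝ) (hM : M.IsHermitian)
    (η₀ : ℝ) (h : ∀ μ ∈ spectrum ℝ M, μ ≤ η₀) (x : Fin n → ℝ) :
    M.mulVec x ⬝ᵥ x ≤ η₀ * (x ⬝ᵥ x) := by
  have hN : (η₀ • (1 : Matrix (Fin n) (Fin n) ℝ) - M).IsHermitian := by
    simp [Matrix.IsHermitian, Matrix.conjTranspose_sub, Matrix.conjTranspose_smul]; exact hM.eq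
  have hpsd : (η₀ • (1 : Matrix (Fin n) (Fin n) ℝ) - M).PosSemidef := by
    apply hN.posSemidef_iff_eigenvalues_nonneg.mpr
    intro i
    have hmem := hN.eigenvalues_mem_spectrum_real i
    have hsp : spectrum ℝ (η₀ • (1 : Matrix (Fin n) (Fin n) ℝ) - M)
        = ({η₀} : Set ℝ) - spectrum ℝ M := by
      rw [show η₀ • (1 : Matrix (Fin n) (Fin n) ℝ) - M
          = algebraMap ℝ (Matrix (Fin n) (Fin n) ℝ) η₀ - M from by
        rw [Algebra.algebraMap_eq_smul_one], ← spectrum.singleton_sub_eq]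
    rw [hsp] at hmem
    obtain ⟨a, ha, b, hb, hab⟩ := hmem
    simp only [Set.mem_singleton_iff] at ha
    have hab' : a - b = hN.eigenvalues i := hab
    subst ha
    rw [← hab']
    linarith [h b hb, show (0 : Fin n → ℝ) i = 0 from rfl]
  have h2 := hpsd.dotProduct_mulVec_nonneg x
  have hse : star x = x := by simp
  rw [hse, Matrix.sub_mulVec, Matrix.smul_mulVec, Matrix.one_mulVec,
    dotProduct_sub, dotProduct_smul] at h2
  have := dotProduct_comm (M.mulVec x) x
  rw [smul_eq_mul] at h2
  linarith [dotProduct_comm x (M.mulVec x)]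

theorem stmt10 (n : ℕ) (A : Matrix (Fin n) (Fin n) ℝ) (hA : A.PosDef)
    (D : Matrix (Fin n) (Fin n) ℝ) (hD : D = Matrix.diagonal fun i => A i i)
    (η₀ ω : ℝ)
    (hη : ∀ μ ∈ spectrum ℂ ((D⁻¹ * A).map Complex.ofReal), ‖μ‖ ≤ η₀)
    (hω0 : 0 < ω) (hω2 : ω < 2 / η₀)
    (S : Matrix (Fin n) (Fin n) ℝ) (hS : S = 1 - ω • (D⁻¹ * A))
    (σ : ℝ) (hσ : σ = ω * (2 - ω * η₀)) :
    ∀ e : Fin n → ℝ,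
      A.mulVec (S.mulVec e) ⬝ᵥ S.mulVec e
        ≤ A.mulVec e ⬝ᵥ e - σ * ((D⁻¹ * A).mulVec e ⬝ᵥ A.mulVec e) := by
  intro e
  classical
  -- diagonal entries positive
  have hd : ∀ i, 0 < A i i := by
    intro i
    have := hA.dotProduct_mulVec_pos (x := Pi.single i 1) (by simp [Pi.single_eq_same, Function.ne_iff])
    simpa [Matrix.mulVec_single, dotProduct, Pi.single_apply, ite_mul] using this
  -- symmetric dot move
  have symm_dot : ∀ (B : Matrix (Fin n) (Fin n) ℝ), Bᵀ = B →
      ∀ u v : Fin n → ℝ, B.mulVec u ⬝ᵥ v = u ⬝ᵥ B.mulVec v := by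
    intro B hB u v
    rw [dotProduct_mulVec, ← Matrix.mulVec_transpose, hB]
  have hAsymm : Aᵀ = A := hA.1.eq
  set s : Fin n → ℝ := fun i => Real.sqrt (A i i) with hs_def
  have hs : ∀ i, 0 < s i := fun i => Real.sqrt_pos.mpr (hd i)
  set E : Matrix (Fin n) (Fin n) ℝ := Matrix.diagonal s with hE_def
  have hEinv : E⁻¹ = Matrix.diagonal (fun i => (s i)⁻¹) := by
    apply Matrix.inv_eq_right_inv
    rw [hE_def, Matrix.diagonal_mul_diagonal]
    rw [show (fun i => s i * (s i)⁻¹) = fun _ => (1:ℝ) from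
      funext fun i => mul_inv_cancel₀ (hs i).ne']
    exact Matrix.diagonal_one
  have hDinv : D⁻¹ = Matrix.diagonal (fun i => (A i i)⁻¹) := by
    apply Matrix.inv_eq_right_inv
    rw [hD, Matrix.diagonal_mul_diagonal]
    rw [show (fun i => A i i * (A i i)⁻¹) = fun _ => (1:ℝ) from
      funext fun i => mul_inv_cancel₀ (hd i).ne']
    exact Matrix.diagonal_one
  have hEE : E⁻¹ * E⁻¹ = D⁻¹ := by
    rw [hEinv, hDinv, Matrix.diagonal_mul_diagonal]
    rw [show (fun i => (s i)⁻¹ * (s i)⁻¹) = fun i => (A i i)⁻¹ from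
      funext fun i => by rw [← mul_inv, Real.mul_self_sqrt (hd i).le]]
  have hEunit : IsUnit E.det := by
    rw [hE_def, Matrix.det_diagonal]
    exact (Finset.prod_pos (fun i _ => hs i)).ne'.isUnit
  have hEinvE : E⁻¹ * E = 1 := Matrix.nonsing_inv_mul E hEunit
  set M : Matrix (Fin n) (Fin n) ℝ := E⁻¹ * A * E⁻¹ with hM_def
  have hEinvsymm : (E⁻¹)ᵀ = E⁻¹ := by rw [hEinv]; exact Matrix.diagonal_transpose _
  have hMsymm : M.IsHermitian := by
    show Mᴴ = M
    rw [hM_def]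
    simp only [Matrix.conjTranspose_eq_transpose_of_trivial, Matrix.transpose_mul,
      hEinvsymm, hAsymm, Matrix.mul_assoc]
  -- spectrum bound for M
  have hspec : ∀ μ ∈ spectrum ℝ M, μ ≤ η₀ := by
    intro μ hμ
    rw [spectrum.mem_iff] at hμ
    rw [Matrix.isUnit_iff_isUnit_det, isUnit_iff_ne_zero, not_not,
      Algebra.algebraMap_eq_smul_one] at hμ
    have hsim : μ • (1 : Matrix (Fin n) (Fin n) ℝ) - D⁻¹ * A
        = E⁻¹ * (μ • (1 : Matrix (Fin n) (Fin n) ℝ) - M) * E := by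
      rw [Matrix.mul_sub, Matrix.sub_mul, Matrix.mul_smul, mul_one, Matrix.smul_mul, hEinvE]
      congr 1
      rw [hM_def]
      simp only [← Matrix.mul_assoc]
      rw [Matrix.mul_assoc (E⁻¹ * E⁻¹ * A) E⁻¹ E, hEinvE, mul_one, hEE]
    have hdetR : (μ • (1 : Matrix (Fin n) (Fin n) ℝ) - D⁻¹ * A).det = 0 := by
      rw [hsim, Matrix.det_mul, Matrix.det_mul, hμ, mul_zero, zero_mul]
    have hdetC : ((μ : ℂ) • (1 : Matrix (Fin n) (Fin n) ℂ)
         - (D⁻¹ * A).map Complex.ofReal).det = 0 := by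
      have hmap : (μ : ℂ) • (1 : Matrix (Fin n) (Fin n) ℂ) - (D⁻¹ * A).map Complex.ofReal
          = (μ • (1 : Matrix (Fin n) (Fin n) ℝ) - D⁻¹ * A).map Complex.ofRealHom := by
        ext i j
        simp [Matrix.map_apply, Matrix.one_apply, Matrix.sub_apply, Matrix.smul_apply,
          apply_ite]
      rw [hmap, ← RingHom.mapMatrix_apply, ← RingHom.map_det, hdetR, map_zero]
    have hmemC : (μ : ℂ) ∈ spectrum ℂ ((D⁻¹ * A).map Complex.ofReal) := by
      rw [spectrum.mem_iff, Matrix.isUnit_iff_isUnit_det, isUnit_iff_ne_zero, not_not,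
        Algebra.algebraMap_eq_smul_one]
      exact hdetC
    calc μ ≤ |μ| := le_abs_self μ
      _ = ‖(μ : ℂ)‖ := by rw [Complex.norm_real, Real.norm_eq_abs]
      _ ≤ η₀ := hη _ hmemC
  -- quadratic bound transported
  have key : ∀ f : Fin n → ℝ,
      A.mulVec (D⁻¹.mulVec f) ⬝ᵥ D⁻¹.mulVec f ≤ η₀ * (D⁻¹.mulVec f ⬝ᵥ f) := by
    intro f
    have h1 := quad_bound M hMsymm η₀ hspec (E⁻¹.mulVec f)
    have hx2 : E⁻¹.mulVec (E⁻¹.mulVec f) = D⁻¹.mulVec f := by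
      rw [Matrix.mulVec_mulVec, hEE]
    have hMx : M.mulVec (E⁻¹.mulVec f) = E⁻¹.mulVec (A.mulVec (D⁻¹.mulVec f)) := by
      rw [hM_def, ← Matrix.mulVec_mulVec, ← Matrix.mulVec_mulVec, hx2]
    rw [hMx, symm_dot _ hEinvsymm, hx2] at h1
    calc A.mulVec (D⁻¹.mulVec f) ⬝ᵥ D⁻¹.mulVec f ≤ η₀ * (E⁻¹.mulVec f ⬝ᵥ E⁻¹.mulVec f) := h1
      _ = η₀ * (D⁻¹.mulVec f ⬝ᵥ f) := by
          rw [← symm_dot _ hEinvsymm, hx2, dotProduct_comm]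
  -- final algebra
  have hDsymm : (D⁻¹)ᵀ = D⁻¹ := by rw [hDinv]; exact Matrix.diagonal_transpose _
  set f := A.mulVec e with hf
  have hPe : (D⁻¹ * A).mulVec e = D⁻¹.mulVec f := (Matrix.mulVec_mulVec e D⁻¹ A).symm
  have hb : (D⁻¹ * A).mulVec e ⬝ᵥ A.mulVec e = D⁻¹.mulVec f ⬝ᵥ f := by rw [hPe]
  have hc := key f
  have hcross : A.mulVec (D⁻¹.mulVec f) ⬝ᵥ e = D⁻¹.mulVec f ⬝ᵥ f := by
    rw [symm_dot A hAsymm, ← hf, dotProduct_comm]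
  have hSe : S.mulVec e = e - ω • D⁻¹.mulVec f := by
    rw [hS, Matrix.sub_mulVec, Matrix.one_mulVec, Matrix.smul_mulVec, hPe]
  rw [hSe, hb]
  simp only [Matrix.mulVec_sub, Matrix.mulVec_smul, sub_dotProduct, dotProduct_sub,
    smul_dotProduct, dotProduct_smul, smul_eq_mul]
  have hcross2 : A.mulVec e ⬝ᵥ D⁻¹.mulVec f = D⁻¹.mulVec f ⬝ᵥ f := by
    rw [dotProduct_comm, ← hf]
  rw [hcross, hcross2, ← hf, hσ]
  nlinarith [hc, sq_nonneg ω, dotProduct_comm (A.mulVec e) e]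
end

section
/- Let N be even, e ∈ ℝ^{N-1} with e_0 = e_N = 0 (boundary convention), and let the coarse vector e_H = (e_2, e_4, …, e_{N-2}). With linear interpolation (I_H^h e_H)_{2i} = e_{2i} and (I_H^h e_H)_{2i+1} = (e_{2i} + e_{2i+2})/2, one has Σ_{i=0}^{N/2-1} (e_{2i+1} - ½e_{2i} - ½e_{2i+2})² ≤ Σ_{i=1}^{N-1} (e_i² - e_i e_{i+1}). -/
theorem stmt13 (N : ℕ) (hN : 0 < N) (hEven : Even N) (e : ℕ → ℝ)
    (h0 : e 0 = 0) (hN0 : e N = 0) :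
    ∑ i ∈ Finset.range (N / 2), (e (2 * i + 1) - e (2 * i) / 2 - e (2 * i + 2) / 2) ^ 2
      ≤ ∑ i ∈ Finset.Icc 1 (N - 1), ((e i) ^ 2 - e i * e (i + 1)) := by
  obtain ⟨M, rfl⟩ := hEven
  have hM : 0 < M := by omega
  have hdiv : (M + M) / 2 = M := by omega
  rw [hdiv]
  set h : ℕ → ℝ := fun i => e i ^ 2 - e i * e (i + 1) with hh
  -- summation by parts identity
  have hA : ∀ n, 2 * ∑ i ∈ Finset.range n, h i
      = ∑ i ∈ Finset.range n, (e (i+1) - e i)^2 + e 0 ^ 2 - e n ^ 2 := by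
    intro n
    induction n with
    | zero => simp
    | succ n ih =>
      rw [Finset.sum_range_succ, Finset.sum_range_succ, mul_add, ih]
      simp only [hh]
      ring
  -- pairing of the difference sum
  have hB : ∀ m, ∑ i ∈ Finset.range (m + m), (e (i+1) - e i)^2
      = ∑ j ∈ Finset.range m,
          ((e (2*j+1) - e (2*j))^2 + (e (2*j+2) - e (2*j+1))^2) := by
    intro m
    induction m with
    | zero => simp
    | succ m ih =>
      have h1 : (m+1) + (m+1) = (m + m) + 1 + 1 := by ring
      rw [h1, Finset.sum_range_succ, Finset.sum_range_succ, ih, Finset.sum_range_succ]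
      have h2 : 2 * m = m + m := by ring
      rw [h2, show m+m+1+1 = m+m+2 from rfl]
      ring
  -- extend the Icc sum to a range sum
  have hIcc : ∑ i ∈ Finset.Icc 1 (M + M - 1), h i = ∑ i ∈ Finset.range (M + M), h i := by
    have e1 : M + M = (M + M - 1) + 1 := by omega
    have e2 : Finset.Icc 1 (M + M - 1) = Finset.Ico 1 (M + M) := by
      rw [← Finset.Ico_add_one_right_eq_Icc]
      congr 1
      omega
    rw [e2, e1, Finset.sum_range_succ', Finset.sum_Ico_eq_sum_range]
    have hz : h 0 = 0 := by simp [hh, h0]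
    rw [hz, add_zero]
    have : (M + M - 1) + 1 - 1 = M + M - 1 := by omega
    rw [this]
    apply Finset.sum_congr rfl
    intro i _
    rw [Nat.add_comm 1 i]
  -- pointwise estimate
  have hpt : ∀ j ∈ Finset.range M,
      2 * (e (2 * j + 1) - e (2 * j) / 2 - e (2 * j + 2) / 2) ^ 2
        ≤ (e (2*j+1) - e (2*j))^2 + (e (2*j+2) - e (2*j+1))^2 := by
    intro j _
    nlinarith [sq_nonneg (e (2*j+2) - e (2*j))]
  have hsum := Finset.sum_le_sum hpt
  rw [← Finset.mul_sum] at hsum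
  have hend : e (M + M) ^ 2 = 0 := by rw [hN0]; ring
  have hA' := hA (M + M)
  rw [hB M] at hA'
  rw [hIcc]
  nlinarith [hsum, hA', hend, sq_nonneg (e 0)]
end
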